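/- If an m-topical map f : ℝⁿ_{≥0} → ℝⁿ_{≥0} is multiplicatively convex and indecomposable, then f is graphically irreducible. -/

import Mathlib

open Filter Set

/-- Vectors in ℝⁿ indexed by `Fin n`. -/
abbrev Vec (n : ℕ) := Fin n → ℝ

/-- Entrywise nonnegative vector: an element of ℝⁿ_{≥0}. -/
def Nonneg {n : ℕ} (x : Vec n) : Prop := ∀ i, 0 ≤ x i

/-- Entrywise positive vector: an element of ℝⁿ_{>0}. -/
def Pos {n : ℕ} (x : Vec n) : Prop := ∀ i, 0 < x i

/-- An m-topical map: continuous on ℝⁿ_{≥0}, preserving ℝⁿ_{≥0}, order-preserving,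
homogeneous of degree one, and mapping the interior ℝⁿ_{>0} into itself. -/
structure IsMTopical {n : ℕ} (f : Vec n → Vec n) : Prop where
  map_nonneg : ∀ x, Nonneg x → Nonneg (f x)
  contOn : ContinuousOn f {x : Vec n | Nonneg x}
  mono : ∀ x y, Nonneg x → Nonneg y → x ≤ y → f x ≤ f y
  hom : ∀ c : ℝ, 0 < c → ∀ x, Nonneg x → f (c • x) = c • f x
  map_pos : ∀ x, Pos x → Pos (f x)

/-- The indicator vector `e_J` of a subset `J ⊆ [n]`. -/
noncomputable def eVec {n : ℕ} (J : Set (Fin n)) : Vec n := J.indicator fun _ => 1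

/-- The all-ones vector `𝟙`. -/
def allOnes (n : ℕ) : Vec n := fun _ => 1
/-- `f` is multiplicatively convex. -/
def MConvex {n : ℕ} (f : Vec n → Vec n) : Prop :=
  ∀ x y : Vec n, Pos x → Pos y → ∀ l : ℝ, 0 < l → l < 1 →
    ∀ i, f (fun j => x j ^ l * y j ^ (1 - l)) i ≤ f x i ^ l * f y i ^ (1 - l)

/-- Arc of the graph `G(f)`: from `i` to `j` whenever `f(𝟙 + t e_{j})_i → ∞`. -/
def Arc {n : ℕ} (f : Vec n → Vec n) (i j : Fin n) : Prop :=
  Tendsto (fun t : ℝ => f (allOnes n + t • eVec {j}) i) atTop atTop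

/-- `f` is graphically irreducible: `G(f)` is strongly connected. -/
def GraphicallyIrreducible {n : ℕ} (f : Vec n → Vec n) : Prop :=
  ∀ i j : Fin n, Relation.ReflTransGen (Arc f) i j

/-- `f` is indecomposable. -/
def Indecomposable {n : ℕ} (f : Vec n → Vec n) : Prop :=
  ¬ ∃ J : Set (Fin n), J.Nonempty ∧ J ≠ univ ∧
      ∀ i ∉ J, ∃ C : ℝ, ∀ᶠ t : ℝ in atTop, f (allOnes n + t • eVec J) i ≤ C


namespace MTopicalAux

variable {n : ℕ} (f : Vec n → Vec n)

lemma eVec_mem {J : Set (Fin n)} {j : Fin n} (h : j ∈ J) : eVec J j = 1 :=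
  Set.indicator_of_mem h _

lemma eVec_not_mem {J : Set (Fin n)} {j : Fin n} (h : j ∉ J) : eVec J j = 0 :=
  Set.indicator_of_notMem h _

lemma eVec_nonneg (J : Set (Fin n)) (j : Fin n) : 0 ≤ eVec J j := by
  by_cases h : j ∈ J
  · rw [eVec_mem h]; norm_num
  · rw [eVec_not_mem h]

lemma vec_apply (J : Set (Fin n)) (t : ℝ) (j : Fin n) :
    (allOnes n + t • eVec J) j = 1 + t * eVec J j := rfl

lemma pos_vec {J : Set (Fin n)} {t : ℝ} (ht : 0 ≤ t) : Pos (allOnes n + t • eVec J) := by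
  intro j
  have h1 := eVec_nonneg (n := n) J j
  have h2 : 0 ≤ t * eVec J j := mul_nonneg ht h1
  simp only [vec_apply]; linarith

/-- `f(𝟙 + t e_J)_i` is bounded for `t ≥ 0`. -/
def Bdd (J : Set (Fin n)) (i : Fin n) : Prop :=
  ∃ C : ℝ, ∀ t : ℝ, 0 ≤ t → f (allOnes n + t • eVec J) i ≤ C

lemma val_mono (hf : IsMTopical f) (J : Set (Fin n)) (i : Fin n)
    {t t' : ℝ} (ht : 0 ≤ t) (htt : t ≤ t') :
    f (allOnes n + t • eVec J) i ≤ f (allOnes n + t' • eVec J) i := by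
  have h := hf.mono _ _ (fun j => (pos_vec ht j).le) (fun j => (pos_vec (ht.trans htt) j).le)
    (fun j => by
      simp only [vec_apply]
      have := eVec_nonneg (n := n) J j
      nlinarith)
  exact h i

lemma bdd_empty (i : Fin n) : Bdd f ∅ i := by
  refine ⟨f (allOnes n) i, fun t ht => ?_⟩
  have h : (allOnes n + t • eVec (∅ : Set (Fin n))) = allOnes n := by
    funext j
    rw [vec_apply, eVec_not_mem (Set.notMem_empty j)]; simp [allOnes]
  rw [h]

lemma bdd_singleton (hf : IsMTopical f) {i j : Fin n} (h : ¬ Arc f i j) : Bdd f {j} i := by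
  by_contra hb
  apply h
  rw [Arc, tendsto_atTop_atTop]
  intro b
  simp only [Bdd, not_exists, not_forall] at hb
  obtain ⟨t₀, ht₀, hlt⟩ := hb b
  push_neg at hlt
  exact ⟨t₀, fun a ha => hlt.le.trans (val_mono f hf _ _ ht₀ ha)⟩

lemma bdd_union (hf : IsMTopical f) (hconv : MConvex f) {J K : Set (Fin n)}
    (hd : Disjoint J K) {i : Fin n} (hJ : Bdd f J i) (hK : Bdd f K i) :
    Bdd f (J ∪ K) i := by
  obtain ⟨CJ, hCJ⟩ := hJ
  obtain ⟨CK, hCK⟩ := hK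
  refine ⟨CJ ^ (1/2 : ℝ) * CK ^ (1/2 : ℝ), fun t ht => ?_⟩
  set s : ℝ := (1 + t) * (1 + t) - 1 with hsdef
  have hs0 : 0 ≤ s := by nlinarith
  set x : Vec n := allOnes n + s • eVec J with hxdef
  set y : Vec n := allOnes n + s • eVec K with hydef
  have hxpos : Pos x := pos_vec hs0
  have hypos : Pos y := pos_vec hs0
  have h12 : (1 - (1/2 : ℝ)) = 1/2 := by norm_num
  have hsq : (1 + s) ^ (1/2 : ℝ) = 1 + t := by
    have h1t : (0:ℝ) ≤ 1 + t := by linarith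
    have h2 : (1 + s) = (1 + t) ^ ((2:ℕ) : ℝ) := by
      rw [Real.rpow_natCast]; rw [hsdef]; ring
    rw [h2, ← Real.rpow_mul h1t]
    norm_num
  have key : (fun j => x j ^ (1/2 : ℝ) * y j ^ (1 - (1/2) : ℝ)) =
      allOnes n + t • eVec (J ∪ K) := by
    funext j
    rw [h12]
    by_cases hj : j ∈ J
    · have hjk : j ∉ K := Set.disjoint_left.mp hd hj
      rw [hxdef, hydef]
      simp only [vec_apply, eVec_mem hj, eVec_not_mem hjk,
        eVec_mem (Set.mem_union_left K hj)]
      rw [mul_zero, add_zero, mul_one, mul_one, Real.one_rpow, mul_one, hsq]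
    · by_cases hk : j ∈ K
      · rw [hxdef, hydef]
        simp only [vec_apply, eVec_mem hk, eVec_not_mem hj,
          eVec_mem (Set.mem_union_right J hk)]
        rw [mul_zero, add_zero, mul_one, mul_one, Real.one_rpow, one_mul, hsq]
      · have hjk : j ∉ J ∪ K := fun hmem => hmem.elim hj hk
        rw [hxdef, hydef]
        simp only [vec_apply, eVec_not_mem hj, eVec_not_mem hk, eVec_not_mem hjk]
        rw [mul_zero, add_zero, mul_zero, add_zero, Real.one_rpow, mul_one]
  have hc := hconv x y hxpos hypos (1/2) (by norm_num) (by norm_num) i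
  rw [key] at hc
  refine hc.trans ?_
  have hfx0 : 0 ≤ f x i := hf.map_nonneg x (fun j => (hxpos j).le) i
  have hfy0 : 0 ≤ f y i := hf.map_nonneg y (fun j => (hypos j).le) i
  rw [h12]
  exact mul_le_mul (Real.rpow_le_rpow hfx0 (hCJ s hs0) (by norm_num))
    (Real.rpow_le_rpow hfy0 (hCK s hs0) (by norm_num))
    (Real.rpow_nonneg hfy0 _) (Real.rpow_nonneg (hfx0.trans (hCJ s hs0)) _)

lemma bdd_of_no_arc (hf : IsMTopical f) (hconv : MConvex f) (i : Fin n)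
    (S : Set (Fin n)) (h : ∀ j ∈ S, ¬ Arc f i j) : Bdd f S i := by
  have hfin : S.Finite := S.toFinite
  revert h
  refine Set.Finite.induction_on (motive := fun s _ => (∀ j ∈ s, ¬ Arc f i j) → Bdd f s i) S hfin
    (fun _ => bdd_empty f i) ?_
  intro a s ha hs ih h
  rw [Set.insert_eq]
  exact bdd_union f hf hconv (Set.disjoint_singleton_left.mpr ha)
    (bdd_singleton f hf (h a (Set.mem_insert a s)))
    (ih fun j hj => h j (Set.mem_insert_of_mem a hj))

end MTopicalAux

/-- An m-convex indecomposable m-topical map is graphically irreducible. -/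
theorem mConvex_indecomposable_graphicallyIrreducible {n : ℕ} (hn : 0 < n)
    (f : Vec n → Vec n) (hf : IsMTopical f) (hconv : MConvex f)
    (hind : Indecomposable f) : GraphicallyIrreducible f := by
  intro i j
  by_contra hj
  apply hind
  refine ⟨{k | Relation.ReflTransGen (Arc f) i k}ᶜ, ⟨j, hj⟩, ?_, ?_⟩
  · intro huniv
    have hi : i ∈ ({k | Relation.ReflTransGen (Arc f) i k}ᶜ : Set (Fin n)) :=
      huniv ▸ Set.mem_univ i
    exact hi Relation.ReflTransGen.refl
  · intro m hm
    have hmR : Relation.ReflTransGen (Arc f) i m := by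
      by_contra h; exact hm h
    obtain ⟨C, hC⟩ := MTopicalAux.bdd_of_no_arc f hf hconv m
      ({k | Relation.ReflTransGen (Arc f) i k}ᶜ)
      (fun k hk harc => Set.notMem_of_mem_compl hk (hmR.tail harc))
    exact ⟨C, (eventually_ge_atTop 0).mono fun t ht => hC t ht⟩
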